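/- arXiv:1311.1375 — 7 statements merged into one kernel-verified Lean document; each statement's English description precedes it below -/
import Mathlib

section
/- Let C ∈ ℂ^{m×n}, Ω ∈ ℂ^{n×n} Hermitian, A = -(1/2)C†C - iΩ. Then for every v ∈ ℂ^n: (C v = 0 and C(iΩ)^k v = 0 for all k ≥ 1) if and only if (C A^k v = 0 for all k ≥ 0). Consequently the pair (C, A) is observable if and only if the stacked matrix [C; CΩ; CΩ²; …; CΩ^{n-1}] has rank n. -/
open Matrix

private lemma sum_mulVec' {m n : ℕ} {ι : Type*} (s : Finset ι)
    (f : ι → Matrix (Fin m) (Fin n) ℂ) (v : Fin n → ℂ) :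
    (∑ i ∈ s, f i).mulVec v = ∑ i ∈ s, (f i).mulVec v := by
  induction s using Finset.cons_induction with
  | empty => simp [Matrix.zero_mulVec]
  | cons a s ha ih => simp [Matrix.add_mulVec, ih]

/-- A acts like -B on vectors repeatedly killed by C. -/
private lemma powkey {m n : ℕ} (C : Matrix (Fin m) (Fin n) ℂ)
    (A B : Matrix (Fin n) (Fin n) ℂ)
    (hA : A = -((1 / 2 : ℂ) • (Cᴴ * C)) - B) (v : Fin n → ℂ)
    (h : (∀ k : ℕ, (C * B ^ k).mulVec v = 0) ∨
         (∀ k : ℕ, (C * A ^ k).mulVec v = 0)) :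
    ∀ k : ℕ, (A ^ k).mulVec v = ((-B) ^ k).mulVec v := by
  have step : ∀ w : Fin n → ℂ, C.mulVec w = 0 →
      A.mulVec w = (-B).mulVec w := by
    intro w hw
    subst hA
    rw [Matrix.sub_mulVec, Matrix.neg_mulVec, Matrix.neg_mulVec,
      Matrix.smul_mulVec, ← Matrix.mulVec_mulVec, hw]
    simp
  intro k
  induction k with
  | zero => simp
  | succ k ih =>
    have hnegpow : ((-B) ^ k) = ((-1 : ℂ) ^ k) • (B ^ k) := by
      rw [← neg_one_smul ℂ B, smul_pow]
    have hkill : C.mulVec ((A ^ k).mulVec v) = 0 := by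
      rcases h with h | h
      · rw [ih, hnegpow, Matrix.smul_mulVec, Matrix.mulVec_smul,
          Matrix.mulVec_mulVec, h k, smul_zero]
      · rw [Matrix.mulVec_mulVec]; exact h k
    calc (A ^ (k + 1)).mulVec v = A.mulVec ((A ^ k).mulVec v) := by
          rw [Matrix.mulVec_mulVec, ← pow_succ']
      _ = (-B).mulVec ((A ^ k).mulVec v) := step _ hkill
      _ = (-B).mulVec (((-B) ^ k).mulVec v) := by rw [ih]
      _ = ((-B) ^ (k + 1)).mulVec v := by
          rw [Matrix.mulVec_mulVec, ← pow_succ']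

private lemma equiv_v {m n : ℕ} (C : Matrix (Fin m) (Fin n) ℂ)
    (A B : Matrix (Fin n) (Fin n) ℂ)
    (hA : A = -((1 / 2 : ℂ) • (Cᴴ * C)) - B) (v : Fin n → ℂ) :
    (∀ k : ℕ, (C * B ^ k).mulVec v = 0) ↔
    (∀ k : ℕ, (C * A ^ k).mulVec v = 0) := by
  have link : ∀ k : ℕ, (∀ j : ℕ, (A ^ j).mulVec v = ((-B) ^ j).mulVec v) →
      (C * A ^ k).mulVec v = ((-1 : ℂ) ^ k) • (C * B ^ k).mulVec v := by
    intro k hkey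
    rw [← Matrix.mulVec_mulVec, hkey k, ← neg_one_smul ℂ B, smul_pow,
      Matrix.smul_mulVec, Matrix.mulVec_smul, Matrix.mulVec_mulVec]
  constructor
  · intro h k
    rw [link k (powkey C A B hA v (Or.inl h)), h k, smul_zero]
  · intro h k
    have := link k (powkey C A B hA v (Or.inr h))
    rw [h k] at this
    have h2 := congrArg (fun w => ((-1 : ℂ) ^ k) • w) this.symm
    simpa [smul_smul, ← mul_pow] using h2
  -- done

/-- Cayley–Hamilton step: vanishing for k < n gives vanishing for all k. -/
private lemma CHlem {m n : ℕ} (C : Matrix (Fin m) (Fin n) ℂ)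
    (Ω : Matrix (Fin n) (Fin n) ℂ) (v : Fin n → ℂ)
    (h : ∀ k < n, (C * Ω ^ k).mulVec v = 0) :
    ∀ k : ℕ, (C * Ω ^ k).mulVec v = 0 := by
  rcases Nat.eq_zero_or_pos n with hn | hn
  · subst hn
    intro k
    ext i
    simp [Matrix.mulVec, dotProduct]
  have : Nonempty (Fin n) := ⟨⟨0, hn⟩⟩
  have hdeg : Ω.charpoly.natDegree = n := by
    simpa using Matrix.charpoly_natDegree_eq_dim Ω
  have hCH : (Polynomial.aeval Ω) Ω.charpoly = 0 := Matrix.aeval_self_charpoly Ω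
  have hsum : Ω ^ n = -∑ i ∈ Finset.range n, Ω.charpoly.coeff i • Ω ^ i := by
    have := Polynomial.aeval_eq_sum_range (R := ℂ) (p := Ω.charpoly) Ω
    rw [hCH, hdeg, Finset.sum_range_succ] at this
    have hmon : Ω.charpoly.coeff n = 1 := by
      have := (Matrix.charpoly_monic Ω).coeff_natDegree
      rwa [hdeg] at this
    rw [hmon, one_smul] at this
    linear_combination (norm := module) -this
  intro k
  induction k using Nat.strong_induction_on with
  | _ k IH =>
    rcases lt_or_ge k n with hk | hk
    · exact h k hk
    · have hkn : k = n + (k - n) := (Nat.add_sub_cancel' hk).symm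
      have hmat : C * Ω ^ k =
          -∑ i ∈ Finset.range n, Ω.charpoly.coeff i • (C * Ω ^ (i + (k - n))) := by
        calc C * Ω ^ k = C * (Ω ^ n * Ω ^ (k - n)) := by rw [← pow_add, ← hkn]
          _ = _ := by
              rw [hsum]
              simp only [neg_mul, mul_neg, Finset.sum_mul, Finset.mul_sum,
                smul_mul_assoc, mul_smul_comm, mul_assoc, ← pow_add]
              simp [Matrix.mul_sum, mul_smul_comm]
      rw [hmat, Matrix.neg_mulVec, sum_mulVec']
      have : ∀ i ∈ Finset.range n,
          (Ω.charpoly.coeff i • (C * Ω ^ (i + (k - n)))).mulVec v = 0 := by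
        intro i hi
        have hilt : i + (k - n) < k := by
          have := Finset.mem_range.mp hi
          omega
        rw [Matrix.smul_mulVec, IH _ hilt, smul_zero]
      rw [Finset.sum_congr rfl this]
      simp

theorem stmt_1 (m n : ℕ) (C : Matrix (Fin m) (Fin n) ℂ)
    (Ω : Matrix (Fin n) (Fin n) ℂ) (hΩ : Ω.IsHermitian)
    (A : Matrix (Fin n) (Fin n) ℂ)
    (hA : A = -((1 / 2 : ℂ) • (Cᴴ * C)) - Complex.I • Ω) :
    (∀ v : Fin n → ℂ,
      (C.mulVec v = 0 ∧ ∀ k : ℕ, 1 ≤ k →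
          (C * (Complex.I • Ω) ^ k).mulVec v = 0) ↔
      (∀ k : ℕ, (C * A ^ k).mulVec v = 0)) ∧
    ((∀ v : Fin n → ℂ, (∀ k : ℕ, (C * A ^ k).mulVec v = 0) → v = 0) ↔
      (Matrix.of fun (p : Fin n × Fin m) (j : Fin n) =>
        (C * Ω ^ (p.1 : ℕ)) p.2 j).rank = n) := by
  set B : Matrix (Fin n) (Fin n) ℂ := Complex.I • Ω with hB
  -- first component
  have hiff1 : ∀ v : Fin n → ℂ,
      (C.mulVec v = 0 ∧ ∀ k : ℕ, 1 ≤ k → (C * B ^ k).mulVec v = 0) ↔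
      (∀ k : ℕ, (C * A ^ k).mulVec v = 0) := by
    intro v
    rw [← equiv_v C A B hA v]
    constructor
    · rintro ⟨h0, h1⟩ k
      rcases Nat.eq_zero_or_pos k with rfl | hk
      · simpa using h0
      · exact h1 k hk
    · intro h
      refine ⟨by simpa using h 0, fun k _ => h k⟩
  refine ⟨hiff1, ?_⟩
  -- relate B powers and Ω powers
  have hBΩ : ∀ (v : Fin n → ℂ),
      (∀ k : ℕ, (C * B ^ k).mulVec v = 0) ↔ (∀ k : ℕ, (C * Ω ^ k).mulVec v = 0) := by
    intro v
    have key : ∀ k : ℕ, (C * B ^ k).mulVec v = (Complex.I ^ k) • (C * Ω ^ k).mulVec v := by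
      intro k
      simp only [hB, smul_pow, Matrix.mul_smul, Matrix.smul_mulVec]
    constructor
    · intro h k
      have := h k
      rw [key k] at this
      exact (smul_eq_zero.mp this).resolve_left (pow_ne_zero k Complex.I_ne_zero)
    · intro h k
      rw [key k, h k, smul_zero]
  -- the stacked matrix
  set M : Matrix (Fin n × Fin m) (Fin n) ℂ :=
    Matrix.of fun (p : Fin n × Fin m) (j : Fin n) => (C * Ω ^ (p.1 : ℕ)) p.2 j with hM
  have hMv : ∀ v : Fin n → ℂ,
      (M.mulVec v = 0 ↔ ∀ k : ℕ, (C * A ^ k).mulVec v = 0) := by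
    intro v
    rw [← equiv_v C A B hA v, hBΩ v]
    constructor
    · intro hv
      apply CHlem
      intro k hk
      ext i
      have := congrFun hv (⟨k, hk⟩, i)
      simpa [hM, Matrix.mulVec, dotProduct] using this
    · intro hv
      ext p
      have := congrFun (hv (p.1 : ℕ)) p.2
      simpa [hM, Matrix.mulVec, dotProduct] using this
  -- rank-nullity
  have hrn : M.rank + Module.finrank ℂ (LinearMap.ker M.mulVecLin) = n := by
    have := LinearMap.finrank_range_add_finrank_ker M.mulVecLin
    simpa [Matrix.rank] using this
  have hker : (∀ v : Fin n → ℂ, (∀ k : ℕ, (C * A ^ k).mulVec v = 0) → v = 0) ↔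
      LinearMap.ker M.mulVecLin = ⊥ := by
    rw [LinearMap.ker_eq_bot']
    constructor
    · intro h v hv
      exact h v ((hMv v).mp (by simpa using hv))
    · intro h v hv
      exact h v (by simpa using (hMv v).mpr hv)
  rw [hker]
  constructor
  · intro h
    rw [h] at hrn
    simp only [finrank_bot] at hrn
    omega
  · intro h
    have : Module.finrank ℂ (LinearMap.ker M.mulVecLin) = 0 := by omega
    exact Submodule.finrank_eq_zero.mp this
end

section
/- Let C ∈ ℂ^{m×n}, Ω ∈ ℂ^{n×n} Hermitian, A = -(1/2)C†C - iΩ. If A is Hurwitz stable, then the pair (C,A) is observable. -/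
open Matrix

theorem stmt_5 (m n : ℕ) (C : Matrix (Fin m) (Fin n) ℂ)
    (Ω : Matrix (Fin n) (Fin n) ℂ) (hΩ : Ω.IsHermitian)
    (A : Matrix (Fin n) (Fin n) ℂ)
    (hA : A = -((1 / 2 : ℂ) • (Cᴴ * C)) - Complex.I • Ω)
    (hstab : ∀ μ : ℂ, μ ∈ spectrum ℂ A → μ.re < 0) :
    ∀ v : Fin n → ℂ, (∀ k : ℕ, (C * A ^ k).mulVec v = 0) → v = 0 := by
  intro v hv
  by_contra hv0
  -- The unobservable subspace
  set N : Submodule ℂ (Fin n → ℂ) :=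
    ⨅ k : ℕ, LinearMap.ker (C * A ^ k).mulVecLin with hN
  have hvN : v ∈ N := by
    simp only [hN, Submodule.mem_iInf, LinearMap.mem_ker, mulVecLin_apply]
    exact hv
  have hmem : ∀ w ∈ N, ∀ k : ℕ, (C * A ^ k).mulVec w = 0 := by
    intro w hw k
    simp only [hN, Submodule.mem_iInf, LinearMap.mem_ker, mulVecLin_apply] at hw
    exact hw k
  -- N is A-invariant
  have hinv : ∀ w ∈ N, A.mulVecLin w ∈ N := by
    intro w hw
    simp only [hN, Submodule.mem_iInf, LinearMap.mem_ker, mulVecLin_apply]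
    intro k
    have := hmem w hw (k + 1)
    rwa [pow_succ, ← Matrix.mul_assoc, ← Matrix.mulVec_mulVec] at this
  have : Nontrivial N := Submodule.nontrivial_iff_ne_bot.mpr (by
    intro h
    exact hv0 (by simpa [h] using hvN))
  -- restricted endomorphism has an eigenvalue
  obtain ⟨μ, hμ⟩ := Module.End.exists_eigenvalue (A.mulVecLin.restrict hinv)
  obtain ⟨x, hx⟩ := hμ.exists_hasEigenvector
  have hxne : (x : Fin n → ℂ) ≠ 0 := fun h => hx.right (Subtype.ext h)
  have hAx : A.mulVec (x : Fin n → ℂ) = μ • (x : Fin n → ℂ) := by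
    have := hx.apply_eq_smul
    have := congrArg (Subtype.val) this
    simpa [LinearMap.restrict_apply, mulVecLin_apply] using this
  -- μ is in the spectrum of A
  have hspec : μ ∈ spectrum ℂ A := by
    rw [← AlgEquiv.spectrum_eq (Matrix.toLinAlgEquiv' (R := ℂ) (n := Fin n)),
      ← Module.End.hasEigenvalue_iff_mem_spectrum]
    refine Module.End.hasEigenvalue_of_hasEigenvector (x := (x : Fin n → ℂ)) ⟨?_, hxne⟩
    rw [Module.End.mem_eigenspace_iff, Matrix.toLinAlgEquiv'_apply]
    exact hAx
  -- C x = 0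
  have hCx : C.mulVec (x : Fin n → ℂ) = 0 := by
    have := hmem x x.2 0
    simpa using this
  set y : Fin n → ℂ := (x : Fin n → ℂ) with hy
  have hherm : star (star y ⬝ᵥ Ω.mulVec y) = star y ⬝ᵥ Ω.mulVec y :=
    calc star (star y ⬝ᵥ Ω *ᵥ y) = star (Ω *ᵥ y) ⬝ᵥ y := (star_dotProduct _ _).symm
      _ = (star y ᵥ* Ωᴴ) ⬝ᵥ y := by rw [star_mulVec]
      _ = star y ⬝ᵥ Ωᴴ *ᵥ y := (dotProduct_mulVec _ _ _).symm
      _ = star y ⬝ᵥ Ω *ᵥ y := by rw [hΩ.eq]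
  have hquad : star y ⬝ᵥ A.mulVec y = -Complex.I * (star y ⬝ᵥ Ω.mulVec y) := by
    rw [hA]
    simp only [Matrix.sub_mulVec, Matrix.neg_mulVec, Matrix.smul_mulVec,
      dotProduct_sub, dotProduct_neg, dotProduct_smul]
    have h1 : (Cᴴ * C).mulVec y = 0 := by
      rw [← Matrix.mulVec_mulVec, hCx, Matrix.mulVec_zero]
    rw [h1]
    simp [smul_eq_mul]
  have heig : star y ⬝ᵥ A.mulVec y = μ * (star y ⬝ᵥ y) := by
    rw [hAx, dotProduct_smul, smul_eq_mul]
  -- star y ⬝ᵥ y is a positive real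
  have h0 : star y ⬝ᵥ y = ((∑ i, Complex.normSq (y i) : ℝ) : ℂ) := by
    rw [dotProduct]
    push_cast
    exact Finset.sum_congr rfl fun i _ => by
      rw [Complex.normSq_eq_conj_mul_self]; rfl
  have hyyre : 0 < (star y ⬝ᵥ y).re := by
    rw [h0, Complex.ofReal_re]
    obtain ⟨i, hi⟩ := Function.ne_iff.mp hxne
    exact Finset.sum_pos' (fun j _ => Complex.normSq_nonneg _)
      ⟨i, Finset.mem_univ i, Complex.normSq_pos.mpr hi⟩
  have hyyim : (star y ⬝ᵥ y).im = 0 := by rw [h0, Complex.ofReal_im]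
  -- Ω quadratic form is real
  have hΩre : (star y ⬝ᵥ Ω.mulVec y).im = 0 := by
    have := congrArg Complex.im hherm
    simp only [Complex.star_def, Complex.conj_im] at this
    linarith
  have hre0 : (star y ⬝ᵥ A.mulVec y).re = 0 := by
    rw [hquad]
    simp [Complex.mul_re, hΩre]
  have hmul : μ.re * (star y ⬝ᵥ y).re = 0 := by
    have := congrArg Complex.re heig
    rw [hre0, Complex.mul_re, hyyim] at this
    linarith
  have hμre : μ.re = 0 := by
    rcases mul_eq_zero.mp hmul with h | h
    · exact h
    · exact absurd h (ne_of_gt hyyre)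
  have := hstab μ hspec
  linarith
end

section
/- Let C ∈ ℂ^{m×n}, Ω ∈ ℂ^{n×n} Hermitian, A = -(1/2)C†C - iΩ. If A is Hurwitz stable, then for every eigenvalue λ of A, any eigenvector v of A with C v = 0 must be zero; moreover unobservability of (C,A) would imply A has a purely imaginary eigenvalue, a contradiction. Hence Hurwitz stability, observability of (C,A), and controllability of (A, -C†) are pairwise equivalent. -/
open Matrix

lemma eig_iff (n : ℕ) (A : Matrix (Fin n) (Fin n) ℂ) (lam : ℂ) :
    lam ∈ spectrum ℂ A ↔ ∃ v, v ≠ 0 ∧ A.mulVec v = lam • v := by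
  rw [spectrum.mem_iff, Matrix.isUnit_iff_isUnit_det, isUnit_iff_ne_zero, not_not,
    ← Matrix.exists_mulVec_eq_zero_iff]
  constructor
  · rintro ⟨v, hv, h⟩
    refine ⟨v, hv, ?_⟩
    rw [Algebra.algebraMap_eq_smul_one, sub_mulVec, smul_mulVec, one_mulVec] at h
    exact (sub_eq_zero.mp h).symm
  · rintro ⟨v, hv, h⟩
    refine ⟨v, hv, ?_⟩
    rw [Algebra.algebraMap_eq_smul_one, sub_mulVec, smul_mulVec, one_mulVec, h, sub_self]

lemma dot_self_re (n : ℕ) (v : Fin n → ℂ) (hv : v ≠ 0) :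
    0 < (star v ⬝ᵥ v).re ∧ (star v ⬝ᵥ v).im = 0 := by
  have h : star v ⬝ᵥ v = ∑ i, (Complex.normSq (v i) : ℂ) := by
    simp [dotProduct, mul_comm, Complex.mul_conj]
  rw [h]
  push_cast [Complex.re_sum, Complex.im_sum]
  simp only [Complex.ofReal_re, Complex.ofReal_im, Finset.sum_const_zero, and_true]
  obtain ⟨i, hi⟩ := Function.ne_iff.mp hv
  exact Finset.sum_pos' (fun j _ => Complex.normSq_nonneg _)
    ⟨i, Finset.mem_univ i, Complex.normSq_pos.mpr hi⟩

lemma dot_herm_im (n : ℕ) (Ω : Matrix (Fin n) (Fin n) ℂ) (hΩ : Ω.IsHermitian)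
    (v : Fin n → ℂ) : (star v ⬝ᵥ Ω.mulVec v).im = 0 := by
  have h : star (star v ⬝ᵥ Ω.mulVec v) = star v ⬝ᵥ Ω.mulVec v :=
    calc star (star v ⬝ᵥ Ω.mulVec v) = star (Ω.mulVec v) ⬝ᵥ v := (star_dotProduct _ _).symm
    _ = star v ᵥ* Ωᴴ ⬝ᵥ v := by rw [star_mulVec]
    _ = star v ᵥ* Ω ⬝ᵥ v := by rw [hΩ.eq]
    _ = star v ⬝ᵥ Ω.mulVec v := (dotProduct_mulVec _ _ _).symm
  have := congrArg Complex.im h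
  simp only [Complex.star_def, Complex.conj_im] at this
  linarith

-- key: Av = lam v, Cv = 0, v ≠ 0  →  lam.re = 0
lemma key_re (m n : ℕ) (C : Matrix (Fin m) (Fin n) ℂ)
    (Ω : Matrix (Fin n) (Fin n) ℂ) (hΩ : Ω.IsHermitian)
    (A : Matrix (Fin n) (Fin n) ℂ)
    (hA : A = -((1 / 2 : ℂ) • (Cᴴ * C)) - Complex.I • Ω)
    (lam : ℂ) (v : Fin n → ℂ) (hv : A.mulVec v = lam • v)
    (hC : C.mulVec v = 0) (hv0 : v ≠ 0) : lam.re = 0 := by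
  have hAv : A.mulVec v = -(Complex.I • Ω.mulVec v) := by
    rw [hA, sub_mulVec, neg_mulVec, smul_mulVec, smul_mulVec,
      ← mulVec_mulVec, hC]
    simp
  have h : lam * (star v ⬝ᵥ v) = -(Complex.I * (star v ⬝ᵥ Ω.mulVec v)) := by
    have := congrArg (fun w => star v ⬝ᵥ w) (hv.symm.trans hAv)
    simpa [dotProduct_smul, smul_eq_mul] using this
  obtain ⟨hre, him⟩ := dot_self_re n v hv0
  have himΩ := dot_herm_im n Ω hΩ v
  have := congrArg Complex.re h
  simp [Complex.mul_re, him, himΩ] at this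
  rcases this with h' | h'
  · exact h'
  · linarith

lemma A_mulVec_ker (m n : ℕ) (C : Matrix (Fin m) (Fin n) ℂ)
    (Ω : Matrix (Fin n) (Fin n) ℂ) (A : Matrix (Fin n) (Fin n) ℂ)
    (hA : A = -((1 / 2 : ℂ) • (Cᴴ * C)) - Complex.I • Ω)
    (w : Fin n → ℂ) (hCw : C.mulVec w = 0) :
    A.mulVec w = -(Complex.I • Ω.mulVec w) := by
  rw [hA, sub_mulVec, neg_mulVec, smul_mulVec, smul_mulVec,
    ← mulVec_mulVec, hCw]
  simp

lemma obs_omega (m n : ℕ) (C : Matrix (Fin m) (Fin n) ℂ)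
    (Ω : Matrix (Fin n) (Fin n) ℂ) (A : Matrix (Fin n) (Fin n) ℂ)
    (hA : A = -((1 / 2 : ℂ) • (Cᴴ * C)) - Complex.I • Ω)
    (v : Fin n → ℂ) :
    (∀ k : ℕ, (C * A ^ k).mulVec v = 0) ↔ (∀ k : ℕ, (C * Ω ^ k).mulVec v = 0) := by
  constructor
  · intro hAk
    have claim : ∀ k : ℕ, (Ω ^ k).mulVec v = (Complex.I) ^ k • (A ^ k).mulVec v := by
      intro k
      induction k with
      | zero => simp
      | succ k ih =>
        have hC : C.mulVec ((A ^ k).mulVec v) = 0 := by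
          rw [mulVec_mulVec]; exact hAk k
        have hstep : A.mulVec ((A ^ k).mulVec v) = -(Complex.I • Ω.mulVec ((A ^ k).mulVec v)) :=
          A_mulVec_ker m n C Ω A hA _ hC
        have hΩA : Ω.mulVec ((A ^ k).mulVec v) = Complex.I • (A ^ (k + 1)).mulVec v := by
          rw [pow_succ', ← mulVec_mulVec, hstep, smul_neg, smul_smul, Complex.I_mul_I]
          simp
        rw [pow_succ', ← mulVec_mulVec, ih, mulVec_smul, hΩA]
        module
    intro k
    rw [← mulVec_mulVec, claim k, mulVec_smul, mulVec_mulVec, hAk k, smul_zero]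
  · intro hΩk
    have claim : ∀ k : ℕ, (A ^ k).mulVec v = (-Complex.I) ^ k • (Ω ^ k).mulVec v := by
      intro k
      induction k with
      | zero => simp
      | succ k ih =>
        have hC : C.mulVec ((Ω ^ k).mulVec v) = 0 := by
          rw [mulVec_mulVec]; exact hΩk k
        have hstep : A.mulVec ((Ω ^ k).mulVec v) = -(Complex.I • Ω.mulVec ((Ω ^ k).mulVec v)) :=
          A_mulVec_ker m n C Ω A hA _ hC
        rw [pow_succ' A, ← mulVec_mulVec, ih, mulVec_smul, hstep, pow_succ' Ω,
          ← mulVec_mulVec]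
        module
    intro k
    rw [← mulVec_mulVec, claim k, mulVec_smul, mulVec_mulVec, hΩk k, smul_zero]

theorem stmt_6 (m n : ℕ) (C : Matrix (Fin m) (Fin n) ℂ)
    (Ω : Matrix (Fin n) (Fin n) ℂ) (hΩ : Ω.IsHermitian)
    (A : Matrix (Fin n) (Fin n) ℂ)
    (hA : A = -((1 / 2 : ℂ) • (Cᴴ * C)) - Complex.I • Ω) :
    -- Hurwitz stability kills eigenvectors of A in Ker C
    ((∀ μ : ℂ, μ ∈ spectrum ℂ A → μ.re < 0) →
      ∀ (lam : ℂ) (v : Fin n → ℂ),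
        A.mulVec v = lam • v → C.mulVec v = 0 → v = 0) ∧
    -- Hurwitz stability ↔ observability of (C, A)
    ((∀ μ : ℂ, μ ∈ spectrum ℂ A → μ.re < 0) ↔
      (∀ v : Fin n → ℂ, (∀ k : ℕ, (C * A ^ k).mulVec v = 0) → v = 0)) ∧
    -- observability of (C, A) ↔ controllability of (A, -Cᴴ)
    ((∀ v : Fin n → ℂ, (∀ k : ℕ, (C * A ^ k).mulVec v = 0) → v = 0) ↔
      (∀ w : Fin n → ℂ,
        (∀ k : ℕ, ((A ^ k * (-Cᴴ))ᴴ).mulVec w = 0) → w = 0)) := by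
  have part1 : (∀ μ : ℂ, μ ∈ spectrum ℂ A → μ.re < 0) →
      ∀ (lam : ℂ) (v : Fin n → ℂ),
        A.mulVec v = lam • v → C.mulVec v = 0 → v = 0 := by
    intro hH lam v hv hC
    by_contra hv0
    have h0 := key_re m n C Ω hΩ A hA lam v hv hC hv0
    have hmem : lam ∈ spectrum ℂ A := (eig_iff n A lam).mpr ⟨v, hv0, hv⟩
    have := hH lam hmem
    linarith
  refine ⟨part1, ⟨?_, ?_⟩, ?_⟩
  · -- Hurwitz → observable
    intro hH v hvk
    by_contra hv0
    set N : Submodule ℂ (Fin n → ℂ) :=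
      ⨅ k : ℕ, LinearMap.ker (C * A ^ k).mulVecLin with hN
    have hmem : ∀ x, x ∈ N ↔ ∀ k : ℕ, (C * A ^ k).mulVec x = 0 := by
      intro x
      simp [hN, Submodule.mem_iInf, LinearMap.mem_ker, mulVecLin_apply]
    have hvN : v ∈ N := (hmem v).mpr hvk
    have hinv : ∀ x ∈ N, A.mulVecLin x ∈ N := by
      intro x hx
      rw [hmem] at hx ⊢
      intro k
      rw [mulVecLin_apply, mulVec_mulVec, Matrix.mul_assoc, ← pow_succ]
      exact hx (k + 1)
    haveI : Nontrivial N := ⟨⟨v, hvN⟩, 0, fun h => hv0 (congrArg Subtype.val h)⟩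
    obtain ⟨c, hc⟩ := Module.End.exists_eigenvalue (A.mulVecLin.restrict hinv)
    obtain ⟨u, hu⟩ := hc.exists_hasEigenvector
    have huv : A.mulVec (u : Fin n → ℂ) = c • (u : Fin n → ℂ) := by
      have := congrArg Subtype.val hu.apply_eq_smul
      simpa [LinearMap.restrict_apply, mulVecLin_apply] using this
    have huC : C.mulVec (u : Fin n → ℂ) = 0 := by
      have := (hmem u).mp u.2 0
      simpa using this
    have hu0 : (u : Fin n → ℂ) ≠ 0 := fun h => hu.2 (Subtype.ext h)
    exact hu0 (part1 hH c u huv huC)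
  · -- observable → Hurwitz
    intro hobs μ hμ
    obtain ⟨v, hv0, hv⟩ := (eig_iff n A μ).mp hμ
    by_cases hCv : C.mulVec v = 0
    · exfalso
      apply hv0
      apply hobs
      intro k
      have hpow : (A ^ k).mulVec v = μ ^ k • v := by
        induction k with
        | zero => simp
        | succ k ih =>
          rw [pow_succ', ← mulVec_mulVec, ih, mulVec_smul, hv, smul_smul, pow_succ', mul_comm]
      rw [← mulVec_mulVec, hpow, mulVec_smul, hCv, smul_zero]
    · -- Cv ≠ 0 forces μ.re < 0
      have hq : star v ⬝ᵥ (Cᴴ * C).mulVec v = star (C.mulVec v) ⬝ᵥ C.mulVec v := by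
        rw [← mulVec_mulVec, dotProduct_mulVec, ← star_mulVec]
      obtain ⟨hqre, hqim⟩ := dot_self_re m (C.mulVec v) hCv
      obtain ⟨hsre, hsim⟩ := dot_self_re n v hv0
      have hrim := dot_herm_im n Ω hΩ v
      have hdot : μ * (star v ⬝ᵥ v) =
          -((1 / 2 : ℂ) * (star (C.mulVec v) ⬝ᵥ C.mulVec v))
            - Complex.I * (star v ⬝ᵥ Ω.mulVec v) := by
        have h1 : star v ⬝ᵥ A.mulVec v = μ * (star v ⬝ᵥ v) := by
          rw [hv, dotProduct_smul, smul_eq_mul]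
        rw [← h1, hA, sub_mulVec, neg_mulVec, smul_mulVec, smul_mulVec]
        rw [dotProduct_sub, dotProduct_neg, dotProduct_smul, dotProduct_smul]
        rw [smul_eq_mul, smul_eq_mul, hq]
      have := congrArg Complex.re hdot
      rw [Complex.mul_re, Complex.sub_re, Complex.neg_re, Complex.mul_re,
        Complex.mul_re] at this
      simp only [Complex.I_re, Complex.I_im, Complex.one_re, Complex.one_im,
        Complex.div_re, Complex.div_im] at this
      rw [hsim, hqim, hrim] at this
      simp at this
      nlinarith
  · -- obs(C,A) ↔ ctrl(A,-Cᴴ)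
    have hAH : Aᴴ = -((1 / 2 : ℂ) • (Cᴴ * C)) - Complex.I • (-Ω) := by
      rw [hA]
      simp only [conjTranspose_sub, conjTranspose_neg, conjTranspose_smul,
        conjTranspose_mul, conjTranspose_conjTranspose, hΩ.eq]
      rw [smul_neg]
      congr 1
      · congr 1
        norm_num
      · rw [Complex.star_def, Complex.conj_I, neg_smul]
    have hrw : ∀ (w : Fin n → ℂ) (k : ℕ),
        ((A ^ k * (-Cᴴ))ᴴ).mulVec w = -((C * (Aᴴ) ^ k).mulVec w) := by
      intro w k
      rw [conjTranspose_mul, conjTranspose_neg, conjTranspose_conjTranspose,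
        conjTranspose_pow, Matrix.neg_mul, neg_mulVec]
    have hneg : ∀ (w : Fin n → ℂ) (k : ℕ),
        (C * (-Ω) ^ k).mulVec w = (-1 : ℂ) ^ k • (C * Ω ^ k).mulVec w := by
      intro w k
      rw [show -Ω = (-1 : ℂ) • Ω by simp, smul_pow, Matrix.mul_smul, smul_mulVec]
    constructor
    · intro h w hw
      apply h
      rw [obs_omega m n C Ω A hA]
      intro k
      have h1 : ∀ k, (C * (Aᴴ) ^ k).mulVec w = 0 := by
        intro k
        have := hw k
        rw [hrw, neg_eq_zero] at this
        exact this
      have h2 := (obs_omega m n C (-Ω) Aᴴ hAH w).mp h1 k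
      rw [hneg, smul_eq_zero] at h2
      rcases h2 with h2 | h2
      · exact absurd h2 (pow_ne_zero k (by norm_num))
      · exact h2
    · intro h v hv
      apply h
      intro k
      rw [hrw, neg_eq_zero]
      revert k
      rw [obs_omega m n C (-Ω) Aᴴ hAH]
      intro k
      rw [hneg, (obs_omega m n C Ω A hA v).mp hv k, smul_zero]
end

section
/- Let C ∈ ℂ^{m×n}, Ω ∈ ℂ^{n×n} Hermitian, A = -(1/2)C†C - iΩ with A Hurwitz stable, and define G(s) = I_m - C(sI - A)^{-1}C† and Σ(s) = (1/2) C (sI + iΩ)^{-1} C†. Then for every s with Re s > 0 (so that both sI - A and sI + iΩ and I + Σ(s) are invertible), G(s) = (I - Σ(s))(I + Σ(s))^{-1}. -/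
open Matrix

theorem stmt_7 (m n : ℕ) (C : Matrix (Fin m) (Fin n) ℂ)
    (Ω : Matrix (Fin n) (Fin n) ℂ) (hΩ : Ω.IsHermitian)
    (A : Matrix (Fin n) (Fin n) ℂ)
    (hA : A = -((1 / 2 : ℂ) • (Cᴴ * C)) - Complex.I • Ω)
    (hstab : ∀ μ : ℂ, μ ∈ spectrum ℂ A → μ.re < 0)
    (s : ℂ) (hs : 0 < s.re)
    (G Sigs : Matrix (Fin m) (Fin m) ℂ)
    (hG : G = 1 - C * (s • (1 : Matrix (Fin n) (Fin n) ℂ) - A)⁻¹ * Cᴴ)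
    (hSig : Sigs = (1 / 2 : ℂ) •
      (C * (s • (1 : Matrix (Fin n) (Fin n) ℂ) + Complex.I • Ω)⁻¹ * Cᴴ)) :
    IsUnit (s • (1 : Matrix (Fin n) (Fin n) ℂ) - A) ∧
    IsUnit (s • (1 : Matrix (Fin n) (Fin n) ℂ) + Complex.I • Ω) ∧
    IsUnit (1 + Sigs) ∧
    G = (1 - Sigs) * (1 + Sigs)⁻¹ := by
  set M : Matrix (Fin n) (Fin n) ℂ := s • (1 : Matrix (Fin n) (Fin n) ℂ) + Complex.I • Ω with hM
  set D : Matrix (Fin n) (Fin n) ℂ := s • (1 : Matrix (Fin n) (Fin n) ℂ) - A with hD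
  have hDM : D = M + (1 / 2 : ℂ) • (Cᴴ * C) := by
    rw [hD, hM, hA]; module
  -- D is invertible since s is not in the spectrum of A
  have hDunit : IsUnit D := by
    by_contra h
    have hmem : s ∈ spectrum ℂ A := by
      rw [spectrum.mem_iff]
      simpa [Algebra.algebraMap_eq_smul_one, hD] using h
    exact absurd (hstab s hmem) (by linarith)
  -- M is invertible
  have hMunit : IsUnit M := by
    rw [Matrix.isUnit_iff_isUnit_det, isUnit_iff_ne_zero]
    intro hdet
    obtain ⟨v, hv, hMv⟩ := (Matrix.exists_mulVec_eq_zero_iff).mpr hdet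
    set p : ℂ := star v ⬝ᵥ v with hp
    set q : ℂ := star v ⬝ᵥ Ω.mulVec v with hq
    have h0 : s * p + Complex.I * q = 0 := by
      have : star v ⬝ᵥ M.mulVec v = 0 := by rw [hMv, dotProduct_zero]
      simpa [hM, Matrix.add_mulVec, Matrix.smul_mulVec, Matrix.one_mulVec,
        dotProduct_add, dotProduct_smul, smul_eq_mul, hp, hq] using this
    have hpre : p = ((∑ i, Complex.normSq (v i) : ℝ) : ℂ) := by
      rw [hp, dotProduct]
      push_cast
      refine Finset.sum_congr rfl fun i _ => ?_
      simp [Pi.star_apply, Complex.normSq_eq_conj_mul_self]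
    have hppos : 0 < (∑ i, Complex.normSq (v i) : ℝ) := by
      obtain ⟨i, hi⟩ := Function.ne_iff.mp hv
      exact Finset.sum_pos' (fun j _ => Complex.normSq_nonneg _)
        ⟨i, Finset.mem_univ i, by simpa [Complex.normSq_pos] using hi⟩
    -- q is real: conj q = q
    have hqreal : star q = q := by
      rw [hq]
      conv_lhs => rw [Matrix.star_dotProduct, star_star, Matrix.star_mulVec,
        ← Matrix.dotProduct_mulVec, hΩ.eq]
    have hqim : q.im = 0 := by
      have := congrArg Complex.im hqreal
      rw [Complex.star_def, Complex.conj_im] at this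
      linarith
    have := congrArg Complex.re h0
    rw [hpre] at this
    simp [Complex.add_re, Complex.mul_re, Complex.I_re, Complex.I_im, hqim] at this
    rcases this with h | h
    · linarith
    · linarith
  -- invertibility of 1 + Sigs
  have hMinvM : M⁻¹ * M = 1 := Matrix.nonsing_inv_mul M (Matrix.isUnit_iff_isUnit_det M |>.mp hMunit)
  have hMMinv : M * M⁻¹ = 1 := Matrix.mul_nonsing_inv M (Matrix.isUnit_iff_isUnit_det M |>.mp hMunit)
  have hDinvD : D⁻¹ * D = 1 := Matrix.nonsing_inv_mul D (Matrix.isUnit_iff_isUnit_det D |>.mp hDunit)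
  have hSunit : IsUnit (1 + Sigs) := by
    rw [Matrix.isUnit_iff_isUnit_det]
    have h1 : 1 + Sigs = 1 + C * ((1 / 2 : ℂ) • (M⁻¹ * Cᴴ)) := by
      rw [hSig]; rw [Matrix.mul_smul, Matrix.mul_assoc]
    have h2 : (1 + C * ((1 / 2 : ℂ) • (M⁻¹ * Cᴴ))).det
        = (1 + ((1 / 2 : ℂ) • (M⁻¹ * Cᴴ)) * C).det := Matrix.det_one_add_mul_comm _ _
    have h3 : (1 : Matrix (Fin n) (Fin n) ℂ) + ((1 / 2 : ℂ) • (M⁻¹ * Cᴴ)) * C = M⁻¹ * D := by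
      rw [hDM, Matrix.mul_add, hMinvM, Matrix.mul_smul, Matrix.smul_mul,
        Matrix.mul_assoc]
    rw [h1, h2, h3, Matrix.det_mul]
    exact ((Matrix.isUnit_nonsing_inv_det_iff.mpr
      (Matrix.isUnit_iff_isUnit_det M |>.mp hMunit)).mul
      (Matrix.isUnit_iff_isUnit_det D |>.mp hDunit))
  refine ⟨hDunit, hMunit, hSunit, ?_⟩
  -- key algebraic identity: C M⁻¹ Cᴴ = C D⁻¹ Cᴴ + (1/2) C D⁻¹ Cᴴ C M⁻¹ Cᴴ
  have hkey : C * M⁻¹ * Cᴴ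
      = C * D⁻¹ * Cᴴ + (1 / 2 : ℂ) • (C * D⁻¹ * Cᴴ * (C * M⁻¹ * Cᴴ)) := by
    have h1 : C * M⁻¹ * Cᴴ = C * D⁻¹ * (D * M⁻¹) * Cᴴ := by
      rw [← Matrix.mul_assoc (C * D⁻¹) D M⁻¹, Matrix.mul_assoc C D⁻¹ D, hDinvD,
        Matrix.mul_one]
    have hDMinv : D * M⁻¹ = 1 + (1 / 2 : ℂ) • (Cᴴ * C * M⁻¹) := by
      rw [hDM, Matrix.add_mul, hMMinv, Matrix.smul_mul]
    have e1 : C * D⁻¹ * (D * M⁻¹) * Cᴴ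
        = C * D⁻¹ * Cᴴ + (1 / 2 : ℂ) • (C * D⁻¹ * Cᴴ * (C * M⁻¹ * Cᴴ)) := by
      rw [hDMinv, Matrix.mul_add, Matrix.mul_one, Matrix.add_mul]
      congr 1
      rw [Matrix.mul_smul, Matrix.smul_mul]
      congr 1
      simp only [Matrix.mul_assoc]
    exact h1.trans e1
  -- G (1 + Sigs) = 1 - Sigs
  have hGS : G * (1 + Sigs) = 1 - Sigs := by
    rw [hG, hSig]
    have expand : (1 - C * D⁻¹ * Cᴴ) * (1 + (1 / 2 : ℂ) • (C * M⁻¹ * Cᴴ))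
        = 1 + (1 / 2 : ℂ) • (C * M⁻¹ * Cᴴ) - C * D⁻¹ * Cᴴ
          - (1 / 2 : ℂ) • (C * D⁻¹ * Cᴴ * (C * M⁻¹ * Cᴴ)) := by
      rw [Matrix.mul_add, Matrix.mul_one, Matrix.sub_mul, Matrix.one_mul,
        Matrix.mul_smul]
      abel
    rw [expand]
    have h4 : C * D⁻¹ * Cᴴ + (1 / 2 : ℂ) • (C * D⁻¹ * Cᴴ * (C * M⁻¹ * Cᴴ))
        = C * M⁻¹ * Cᴴ := hkey.symm
    have : (1 : Matrix (Fin m) (Fin m) ℂ) + (1 / 2 : ℂ) • (C * M⁻¹ * Cᴴ)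
        - (C * D⁻¹ * Cᴴ + (1 / 2 : ℂ) • (C * D⁻¹ * Cᴴ * (C * M⁻¹ * Cᴴ)))
        = 1 - (1 / 2 : ℂ) • (C * M⁻¹ * Cᴴ) := by
      rw [h4]; module
    rw [← this]; abel
  calc G = G * ((1 + Sigs) * (1 + Sigs)⁻¹) := by
        rw [Matrix.mul_nonsing_inv _ (Matrix.isUnit_iff_isUnit_det _ |>.mp hSunit),
          Matrix.mul_one]
    _ = (1 - Sigs) * (1 + Sigs)⁻¹ := by rw [← Matrix.mul_assoc, hGS]
end

section
/- Let C ∈ ℂ^{m×n}, Ω ∈ ℂ^{n×n} Hermitian, and define Σ(s) = (1/2) C (sI + iΩ)^{-1} C†. Then for all s ∈ ℂ with Re s > 0, Σ(s) + Σ(s)† = (Re s) · C (sI + iΩ)^{-1} (C (sI + iΩ)^{-1})† ≥ 0 (positive semidefinite); moreover if ω ∈ ℝ is such that iωI + iΩ is invertible, then Σ(iω) + Σ(iω)† = 0. Consequently Σ is lossless positive real. -/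
open Matrix ComplexOrder

private lemma aux_conjT (n : ℕ) (Ω : Matrix (Fin n) (Fin n) ℂ) (hΩ : Ω.IsHermitian) (s : ℂ) :
    (s • (1 : Matrix (Fin n) (Fin n) ℂ) + Complex.I • Ω)ᴴ
      = (starRingEnd ℂ s) • (1 : Matrix (Fin n) (Fin n) ℂ) - Complex.I • Ω := by
  rw [conjTranspose_add, conjTranspose_smul, conjTranspose_smul, conjTranspose_one, hΩ.eq]
  simp [sub_eq_add_neg, neg_smul]

private lemma aux_sum (n : ℕ) (Ω : Matrix (Fin n) (Fin n) ℂ) (hΩ : Ω.IsHermitian) (s : ℂ) :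
    (s • (1 : Matrix (Fin n) (Fin n) ℂ) + Complex.I • Ω)
      + (s • (1 : Matrix (Fin n) (Fin n) ℂ) + Complex.I • Ω)ᴴ
      = ((2 * s.re : ℝ) : ℂ) • (1 : Matrix (Fin n) (Fin n) ℂ) := by
  rw [aux_conjT n Ω hΩ s]
  have h : ((2 * s.re : ℝ) : ℂ) = s + starRingEnd ℂ s := by
    simp [Complex.ext_iff]; ring
  rw [h]
  module

private lemma aux_unit (n : ℕ) (Ω : Matrix (Fin n) (Fin n) ℂ) (hΩ : Ω.IsHermitian) (s : ℂ)
    (hs : 0 < s.re) :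
    IsUnit (s • (1 : Matrix (Fin n) (Fin n) ℂ) + Complex.I • Ω) := by
  set A := s • (1 : Matrix (Fin n) (Fin n) ℂ) + Complex.I • Ω with hA
  rw [Matrix.isUnit_iff_isUnit_det, isUnit_iff_ne_zero]
  intro hdet
  obtain ⟨v, hv, hAv⟩ := (Matrix.exists_mulVec_eq_zero_iff).mpr hdet
  have h1 : star v ⬝ᵥ (A *ᵥ v) = 0 := by rw [hAv, dotProduct_zero]
  have h2 : star v ⬝ᵥ (Aᴴ *ᵥ v) = 0 := by
    have h := congrArg star h1
    rw [star_zero, star_dotProduct, star_star] at h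
    rwa [star_mulVec, ← Matrix.dotProduct_mulVec] at h
  have h3 : star v ⬝ᵥ ((A + Aᴴ) *ᵥ v) = 0 := by
    rw [Matrix.add_mulVec, dotProduct_add, h1, h2, add_zero]
  rw [aux_sum n Ω hΩ s, Matrix.smul_mulVec, Matrix.one_mulVec, dotProduct_smul,
    smul_eq_mul, mul_eq_zero] at h3
  rcases h3 with h3 | h3
  · have : (2 * s.re : ℝ) ≠ 0 := by positivity
    exact this (by exact_mod_cast h3)
  · exact hv (dotProduct_star_self_eq_zero.mp h3)

theorem stmt_8 (m n : ℕ) (C : Matrix (Fin m) (Fin n) ℂ)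
    (Ω : Matrix (Fin n) (Fin n) ℂ) (hΩ : Ω.IsHermitian)
    (Sigf : ℂ → Matrix (Fin m) (Fin m) ℂ)
    (hSig : ∀ s : ℂ, Sigf s = (1 / 2 : ℂ) •
      (C * (s • (1 : Matrix (Fin n) (Fin n) ℂ) + Complex.I • Ω)⁻¹ * Cᴴ)) :
    (∀ s : ℂ, 0 < s.re →
      IsUnit (s • (1 : Matrix (Fin n) (Fin n) ℂ) + Complex.I • Ω) ∧
      Sigf s + (Sigf s)ᴴ = (s.re : ℂ) •
        ((C * (s • (1 : Matrix (Fin n) (Fin n) ℂ) + Complex.I • Ω)⁻¹) *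
          (C * (s • (1 : Matrix (Fin n) (Fin n) ℂ) + Complex.I • Ω)⁻¹)ᴴ) ∧
      (Sigf s + (Sigf s)ᴴ).PosSemidef) ∧
    (∀ ω : ℝ,
      IsUnit ((Complex.I * (ω : ℂ)) • (1 : Matrix (Fin n) (Fin n) ℂ)
          + Complex.I • Ω) →
      Sigf (Complex.I * (ω : ℂ)) + (Sigf (Complex.I * (ω : ℂ)))ᴴ = 0) := by
  have half : star ((1 : ℂ) / 2) = 1 / 2 := by norm_num
  constructor
  · intro s hs
    set A := s • (1 : Matrix (Fin n) (Fin n) ℂ) + Complex.I • Ω with hA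
    have hU : IsUnit A := aux_unit n Ω hΩ s hs
    have hdet : IsUnit A.det := (Matrix.isUnit_iff_isUnit_det A).mp hU
    have hdetH : IsUnit Aᴴ.det := by
      rw [Matrix.det_conjTranspose]; exact hdet.star
    have hSig' : Sigf s = (1 / 2 : ℂ) • (C * A⁻¹ * Cᴴ) := by
      rw [hSig s, ← hA]
    have hSH : (Sigf s)ᴴ = (1 / 2 : ℂ) • (C * (Aᴴ)⁻¹ * Cᴴ) := by
      rw [hSig', conjTranspose_smul, conjTranspose_mul, conjTranspose_mul,
        conjTranspose_conjTranspose, Matrix.conjTranspose_nonsing_inv, half, ← Matrix.mul_assoc]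
    have key : A⁻¹ + (Aᴴ)⁻¹ = ((2 * s.re : ℝ) : ℂ) • (A⁻¹ * (Aᴴ)⁻¹) := by
      have h1 : A⁻¹ * (A + Aᴴ) * (Aᴴ)⁻¹ = A⁻¹ + (Aᴴ)⁻¹ := by
        rw [mul_add, add_mul, Matrix.nonsing_inv_mul A hdet, one_mul,
          mul_assoc, Matrix.mul_nonsing_inv Aᴴ hdetH, mul_one, add_comm]
      rw [← h1, aux_sum n Ω hΩ s, Matrix.mul_smul, mul_one, Matrix.smul_mul]
    have hmain : Sigf s + (Sigf s)ᴴ = (s.re : ℂ) • ((C * A⁻¹) * (C * A⁻¹)ᴴ) := by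
      rw [hSH, hSig', ← smul_add, conjTranspose_mul, Matrix.conjTranspose_nonsing_inv]
      have h2 : C * A⁻¹ * Cᴴ + C * (Aᴴ)⁻¹ * Cᴴ = C * (A⁻¹ + (Aᴴ)⁻¹) * Cᴴ := by
        rw [Matrix.mul_add, Matrix.add_mul]
      rw [h2, key, Matrix.mul_smul, Matrix.smul_mul, smul_smul,
        show ((1:ℂ)/2) * ((2 * s.re : ℝ) : ℂ) = (s.re : ℂ) by push_cast; ring]
      congr 1
      rw [Matrix.mul_assoc, Matrix.mul_assoc, Matrix.mul_assoc]
    refine ⟨hU, hmain, ?_⟩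
    rw [hmain]
    set B := C * A⁻¹ with hB
    set r : ℝ := Real.sqrt s.re with hr
    have hrr : (r : ℂ) * (r : ℂ) = (s.re : ℂ) := by
      rw [← Complex.ofReal_mul, Real.mul_self_sqrt hs.le]
    have h3 : (s.re : ℂ) • (B * Bᴴ) = ((r : ℂ) • B) * ((r : ℂ) • B)ᴴ := by
      rw [conjTranspose_smul, Matrix.smul_mul, Matrix.mul_smul, smul_smul,
        show star (r : ℂ) = (r : ℂ) by simp, hrr]
    rw [h3]
    exact Matrix.posSemidef_self_mul_conjTranspose _
  · intro ω hU
    set s : ℂ := Complex.I * (ω : ℂ) with hs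
    set A := s • (1 : Matrix (Fin n) (Fin n) ℂ) + Complex.I • Ω with hA
    have hdet : IsUnit A.det := (Matrix.isUnit_iff_isUnit_det A).mp hU
    have hAH : Aᴴ = -A := by
      rw [aux_conjT n Ω hΩ s, show starRingEnd ℂ s = -s by simp [hs, Complex.ext_iff], hA]
      module
    have hinv : (Aᴴ)⁻¹ = -(A⁻¹) := by
      rw [hAH]
      apply Matrix.inv_eq_right_inv
      rw [neg_mul_neg, Matrix.mul_nonsing_inv A hdet]
    have hSig' : Sigf s = (1 / 2 : ℂ) • (C * A⁻¹ * Cᴴ) := by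
      rw [hSig s, ← hA]
    have hSH : (Sigf s)ᴴ = (1 / 2 : ℂ) • (C * (Aᴴ)⁻¹ * Cᴴ) := by
      rw [hSig', conjTranspose_smul, conjTranspose_mul, conjTranspose_mul,
        conjTranspose_conjTranspose, Matrix.conjTranspose_nonsing_inv, half, ← Matrix.mul_assoc]
    rw [hSH, hSig', hinv, ← smul_add]
    simp [Matrix.mul_neg, Matrix.neg_mul]
end

section
/- Let C ∈ ℂ^{m×n}, Ω ∈ ℂ^{n×n} Hermitian, A = -(1/2)C†C - iΩ, and G(s) = I_m - C(sI - A)^{-1}C†. Then for every ω ∈ ℝ such that iωI - A is invertible, G(iω)† G(iω) = G(iω) G(iω)† = I_m. -/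
open Matrix

theorem stmt_9 (m n : ℕ) (C : Matrix (Fin m) (Fin n) ℂ)
    (Ω : Matrix (Fin n) (Fin n) ℂ) (hΩ : Ω.IsHermitian)
    (A : Matrix (Fin n) (Fin n) ℂ)
    (hA : A = -((1 / 2 : ℂ) • (Cᴴ * C)) - Complex.I • Ω)
    (ω : ℝ)
    (hinv : IsUnit ((Complex.I * (ω : ℂ)) •
      (1 : Matrix (Fin n) (Fin n) ℂ) - A))
    (G : Matrix (Fin m) (Fin m) ℂ)
    (hG : G = 1 - C * ((Complex.I * (ω : ℂ)) •
      (1 : Matrix (Fin n) (Fin n) ℂ) - A)⁻¹ * Cᴴ) :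
    Gᴴ * G = 1 ∧ G * Gᴴ = 1 := by
  set M : Matrix (Fin n) (Fin n) ℂ :=
    (Complex.I * (ω : ℂ)) • (1 : Matrix (Fin n) (Fin n) ℂ) - A with hM
  have hdet : IsUnit M.det := (Matrix.isUnit_iff_isUnit_det M).mp hinv
  have hdetH : IsUnit Mᴴ.det := by
    rw [Matrix.det_conjTranspose]
    exact hdet.star
  have hkey : M + Mᴴ = Cᴴ * C := by
    rw [hM, hA]
    have hΩ' : Ωᴴ = Ω := hΩ
    ext i j
    simp [Matrix.add_apply, Matrix.sub_apply, Matrix.smul_apply, Matrix.neg_apply,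
      Matrix.one_apply, Matrix.conjTranspose_apply, hΩ.apply, Complex.star_def]
    rcases eq_or_ne i j with h | h <;> simp [h] <;> ring
  have hGH : Gᴴ = 1 - C * Mᴴ⁻¹ * Cᴴ := by
    rw [hG]
    simp [Matrix.conjTranspose_sub, Matrix.conjTranspose_mul,
      Matrix.conjTranspose_nonsing_inv, Matrix.mul_assoc]
  have hMinv : M⁻¹ * M = 1 := Matrix.nonsing_inv_mul M hdet
  have hMinv' : M * M⁻¹ = 1 := Matrix.mul_nonsing_inv M hdet
  have hMHinv : Mᴴ⁻¹ * Mᴴ = 1 := Matrix.nonsing_inv_mul Mᴴ hdetH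
  have hMHinv' : Mᴴ * Mᴴ⁻¹ = 1 := Matrix.mul_nonsing_inv Mᴴ hdetH
  have key1 : (C * Mᴴ⁻¹ * Cᴴ) * (C * M⁻¹ * Cᴴ)
      = C * Mᴴ⁻¹ * Cᴴ + C * M⁻¹ * Cᴴ := by
    have : (C * Mᴴ⁻¹ * Cᴴ) * (C * M⁻¹ * Cᴴ)
        = C * (Mᴴ⁻¹ * ((M + Mᴴ) * M⁻¹)) * Cᴴ := by
      rw [hkey]; simp only [Matrix.mul_assoc]
    rw [this, Matrix.add_mul, Matrix.mul_add, hMinv']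
    rw [Matrix.mul_add,
      show Mᴴ⁻¹ * (Mᴴ * M⁻¹) = (Mᴴ⁻¹ * Mᴴ) * M⁻¹ from (Matrix.mul_assoc _ _ _).symm,
      hMHinv, Matrix.one_mul, Matrix.mul_one, Matrix.add_mul]
  have key2 : (C * M⁻¹ * Cᴴ) * (C * Mᴴ⁻¹ * Cᴴ)
      = C * Mᴴ⁻¹ * Cᴴ + C * M⁻¹ * Cᴴ := by
    have : (C * M⁻¹ * Cᴴ) * (C * Mᴴ⁻¹ * Cᴴ)
        = C * (M⁻¹ * ((M + Mᴴ) * Mᴴ⁻¹)) * Cᴴ := by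
      rw [hkey]; simp only [Matrix.mul_assoc]
    rw [this, Matrix.add_mul, Matrix.mul_add, hMHinv']
    rw [Matrix.mul_add,
      show M⁻¹ * (M * Mᴴ⁻¹) = (M⁻¹ * M) * Mᴴ⁻¹ from (Matrix.mul_assoc _ _ _).symm,
      hMinv, Matrix.one_mul, Matrix.mul_one, Matrix.add_mul]
  constructor
  · rw [hGH, hG]
    rw [Matrix.sub_mul, Matrix.mul_sub, Matrix.mul_sub, Matrix.one_mul,
      Matrix.mul_one, key1]
    noncomm_ring
  · rw [hGH, hG]
    rw [Matrix.sub_mul, Matrix.mul_sub, Matrix.mul_sub, Matrix.one_mul,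
      Matrix.mul_one, key2]
    noncomm_ring
end

section
/- Let Ω ∈ ℂ^{n×n} be Hermitian with spectral decomposition Ω = Σ_{ω ∈ spec(Ω)} ω P_ω, and let C ∈ ℂ^{1×n}. Then the rank of the stacked matrix [C; CΩ; …; CΩ^{n-1}] equals the number of distinct eigenvalues ω of Ω for which C P_ω C† ≠ 0. -/
open Matrix Finset

lemma aux_li (n : ℕ) (s : Finset ℝ) (hs : s.card ≤ n) :
    LinearIndependent ℂ (fun μ : s => fun p : Fin n × Fin 1 => ((μ : ℝ) : ℂ) ^ (p.1 : ℕ)) := by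
  classical
  set m := s.card with hm
  set w : Fin m → ℂ := fun i => ((s.equivFin.symm i : ℝ) : ℂ) with hwdef
  have hw : Function.Injective w := by
    intro a b hab
    have : (s.equivFin.symm a : ℝ) = (s.equivFin.symm b : ℝ) :=
      Complex.ofReal_injective hab
    exact s.equivFin.symm.injective (Subtype.ext this)
  have hdet : (Matrix.vandermonde w).det ≠ 0 := Matrix.det_vandermonde_ne_zero_iff.mpr hw
  have hunit : IsUnit (Matrix.vandermonde w) :=
    (Matrix.isUnit_iff_isUnit_det _).mpr (isUnit_iff_ne_zero.mpr hdet)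
  have hli : LinearIndependent ℂ (fun i => Matrix.vandermonde w i) :=
    Matrix.linearIndependent_rows_iff_isUnit.mpr hunit
  let φ : ((Fin n × Fin 1) → ℂ) →ₗ[ℂ] (Fin m → ℂ) :=
    LinearMap.funLeft ℂ ℂ (fun j : Fin m => (Fin.castLE hs j, 0))
  have heq : ⇑φ ∘ (fun i : Fin m => fun p : Fin n × Fin 1 =>
      ((s.equivFin.symm i : ℝ) : ℂ) ^ (p.1 : ℕ)) = fun i => Matrix.vandermonde w i := by
    funext i j
    simp [φ, LinearMap.funLeft, Matrix.vandermonde, w]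
  have hli2 : LinearIndependent ℂ
      (fun i : Fin m => fun p : Fin n × Fin 1 => ((s.equivFin.symm i : ℝ) : ℂ) ^ (p.1 : ℕ)) :=
    LinearIndependent.of_comp φ (heq ▸ hli)
  have hfin := hli2.comp s.equivFin s.equivFin.injective
  have heq2 : (fun μ : s => fun p : Fin n × Fin 1 => ((μ : ℝ) : ℂ) ^ (p.1 : ℕ)) =
      (fun i : Fin m => fun p : Fin n × Fin 1 =>
        ((s.equivFin.symm i : ℝ) : ℂ) ^ (p.1 : ℕ)) ∘ s.equivFin := by
    funext μ p
    simp
  exact heq2 ▸ hfin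

theorem stmt_13 (n : ℕ) (Ω : Matrix (Fin n) (Fin n) ℂ) (hΩ : Ω.IsHermitian)
    (C : Matrix (Fin 1) (Fin n) ℂ)
    (P : ℝ → Matrix (Fin n) (Fin n) ℂ)
    -- P μ is the orthogonal projection onto the eigenspace of Ω for μ
    (hP : ∀ μ : ℝ, P μ = (hΩ.eigenvectorUnitary : Matrix (Fin n) (Fin n) ℂ) *
      Matrix.diagonal (fun i => if hΩ.eigenvalues i = μ then (1 : ℂ) else 0) *
      (hΩ.eigenvectorUnitary : Matrix (Fin n) (Fin n) ℂ)ᴴ) :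
    (Matrix.of fun (p : Fin n × Fin 1) (j : Fin n) =>
        (C * Ω ^ (p.1 : ℕ)) p.2 j).rank =
    ((Finset.univ.image hΩ.eigenvalues).filter
        fun μ => C * P μ * Cᴴ ≠ 0).card := by
  classical
  set U : Matrix (Fin n) (Fin n) ℂ := (hΩ.eigenvectorUnitary : Matrix (Fin n) (Fin n) ℂ) with hUdef
  set lam := hΩ.eigenvalues with hlam
  set v : Matrix (Fin 1) (Fin n) ℂ := C * U with hvdef
  have hU1 : star U * U = 1 := Unitary.coe_star_mul_self hΩ.eigenvectorUnitary
  have hU2 : U * star U = 1 := Unitary.coe_mul_star_self hΩ.eigenvectorUnitary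
  -- powers of Ω
  have hpow : ∀ k : ℕ, Ω ^ k = U * (Matrix.diagonal fun l => ((lam l : ℂ)) ^ k) * star U := by
    intro k
    induction k with
    | zero => simp [hU2]
    | succ k ih =>
      rw [pow_succ, ih, hΩ.spectral_theorem, Unitary.conjStarAlgAut_apply]
      have h1 : (U * (Matrix.diagonal fun l => ((lam l : ℂ)) ^ k) * star U) *
          (U * Matrix.diagonal (RCLike.ofReal ∘ lam) * star U) =
          U * ((Matrix.diagonal fun l => ((lam l : ℂ)) ^ k) *
            ((star U * U) * (Matrix.diagonal (RCLike.ofReal ∘ lam) * star U))) := by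
        simp only [Matrix.mul_assoc]
      rw [h1, hU1, Matrix.one_mul, ← Matrix.mul_assoc (Matrix.diagonal _),
        Matrix.diagonal_mul_diagonal]
      have h2 : (fun l => ((lam l : ℂ)) ^ k * (RCLike.ofReal ∘ lam) l) =
          fun l => ((lam l : ℂ)) ^ (k + 1) := by
        funext l
        simp [pow_succ, Function.comp, RCLike.ofReal]
      rw [h2, ← Matrix.mul_assoc]
  -- entries of C * Ω^k
  have key : ∀ (k : ℕ) (j : Fin n),
      (C * Ω ^ k) 0 j = ∑ l, v 0 l * ((lam l : ℂ)) ^ k * (star U) l j := by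
    intro k j
    rw [hpow k]
    have : C * (U * (Matrix.diagonal fun l => ((lam l : ℂ)) ^ k) * star U) =
        v * (Matrix.diagonal fun l => ((lam l : ℂ)) ^ k) * star U := by
      rw [hvdef]; simp only [Matrix.mul_assoc]
    rw [this, Matrix.mul_apply]
    congr 1
    funext l
    rw [Matrix.mul_diagonal]
  -- the Krylov matrix as B * star U
  set B : Matrix (Fin n × Fin 1) (Fin n) ℂ :=
    Matrix.of (fun p j => v 0 j * ((lam j : ℂ)) ^ (p.1 : ℕ)) with hBdef
  have hA : (Matrix.of fun (p : Fin n × Fin 1) (j : Fin n) =>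
      (C * Ω ^ (p.1 : ℕ)) p.2 j) = B * star U := by
    ext p j
    have h2 : p.2 = 0 := Subsingleton.elim _ _
    rw [Matrix.of_apply, h2, key, Matrix.mul_apply]
    rfl
  have hUdet : IsUnit (star U).det := by
    apply IsUnit.of_mul_eq_one U.det
    rw [← Matrix.det_mul, hU1, Matrix.det_one]
  have hrank : (Matrix.of fun (p : Fin n × Fin 1) (j : Fin n) =>
      (C * Ω ^ (p.1 : ℕ)) p.2 j).rank = B.rank := by
    rw [hA]
    exact Matrix.rank_mul_eq_left_of_isUnit_det _ _ hUdet
  -- the support finset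
  set T : Finset ℝ := (Finset.univ.filter fun j => v 0 j ≠ 0).image lam with hTdef
  have hTn : T.card ≤ n := by
    calc T.card ≤ (Finset.univ.filter fun j => v 0 j ≠ 0).card := Finset.card_image_le
    _ ≤ (Finset.univ : Finset (Fin n)).card := Finset.card_filter_le _ _
    _ = n := by simp
  -- rank of B
  set u : ℝ → (Fin n × Fin 1 → ℂ) := fun μ p => ((μ : ℂ)) ^ (p.1 : ℕ) with hudef
  have hspan : Submodule.span ℂ (Set.range Bᵀ) = Submodule.span ℂ (u '' ↑T) := by
    apply le_antisymm <;> rw [Submodule.span_le]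
    · rintro _ ⟨j, rfl⟩
      have hcol : Bᵀ j = v 0 j • u (lam j) := by
        funext p
        simp [hBdef, hudef, Matrix.transpose_apply, mul_comm]
      by_cases hj : v 0 j = 0
      · rw [hcol, hj, zero_smul]
        exact Submodule.zero_mem _
      · rw [hcol]
        refine Submodule.smul_mem _ _ (Submodule.subset_span ?_)
        refine ⟨lam j, ?_, rfl⟩
        simp only [hTdef, Finset.coe_image, Set.mem_image, Finset.mem_coe,
          Finset.mem_filter, Finset.mem_univ, true_and]
        exact ⟨j, hj, rfl⟩
    · rintro _ ⟨μ, hμ, rfl⟩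
      rw [hTdef] at hμ
      simp only [Finset.coe_image, Set.mem_image, Finset.mem_coe,
        Finset.mem_filter, Finset.mem_univ, true_and] at hμ
      obtain ⟨j, hj, rfl⟩ := hμ
      have hcol : u (lam j) = (v 0 j)⁻¹ • Bᵀ j := by
        funext p
        simp only [hBdef, hudef, Matrix.transpose_apply, Matrix.of_apply, Pi.smul_apply,
          smul_eq_mul]
        rw [← mul_assoc, inv_mul_cancel₀ hj, one_mul]
      rw [hcol]
      exact Submodule.smul_mem _ _ (Submodule.subset_span ⟨j, rfl⟩)
  have hrankB : B.rank = T.card := by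
    rw [Matrix.rank_eq_finrank_span_cols, Matrix.col_def, hspan]
    have hli := aux_li n T hTn
    have himg : u '' ↑T = Set.range (fun μ : T => u μ) := Set.image_eq_range u ↑T
    rw [himg, finrank_span_eq_card hli, Fintype.card_coe]
  -- identify the filter with T
  have hentry : ∀ μ : ℝ, (C * P μ * Cᴴ) 0 0 =
      ((∑ j, if lam j = μ then Complex.normSq (v 0 j) else 0 : ℝ) : ℂ) := by
    intro μ
    rw [hP μ]
    have h1 : C * ((U * Matrix.diagonal fun i => if lam i = μ then (1:ℂ) else 0) * Uᴴ) * Cᴴ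
        = v * (Matrix.diagonal fun i => if lam i = μ then (1:ℂ) else 0) * (Uᴴ * Cᴴ) := by
      rw [hvdef]
      simp only [Matrix.mul_assoc]
    rw [h1, ← Matrix.conjTranspose_mul, ← hvdef]
    rw [Matrix.mul_apply, Complex.ofReal_sum]
    congr 1
    funext j
    rw [Matrix.mul_diagonal, Matrix.conjTranspose_apply]
    split_ifs with hij
    · rw [mul_one]
      exact Complex.mul_conj (v 0 j)
    · rw [mul_zero, zero_mul, Complex.ofReal_zero]
  have hne : ∀ μ : ℝ, (C * P μ * Cᴴ ≠ 0) ↔ ∃ j, v 0 j ≠ 0 ∧ lam j = μ := by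
    intro μ
    constructor
    · intro h
      by_contra hc
      push_neg at hc
      apply h
      ext i k
      have hi : i = 0 := Subsingleton.elim _ _
      have hk : k = 0 := Subsingleton.elim _ _
      rw [hi, hk, hentry μ, Matrix.zero_apply]
      norm_cast
      apply Finset.sum_eq_zero
      intro j _
      split_ifs with hij
      · have hv0 : v 0 j = 0 := by
          by_contra hv
          exact hc j hv hij
        rw [hv0, Complex.normSq_zero]
      · rfl
    · rintro ⟨j, hv0, hjμ⟩ h0
      have hz := hentry μ
      rw [h0, Matrix.zero_apply] at hz
      have hr : (∑ i, if lam i = μ then Complex.normSq (v 0 i) else 0 : ℝ) = 0 := by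
        exact_mod_cast hz.symm
      have hpos : 0 < ∑ i, if lam i = μ then Complex.normSq (v 0 i) else 0 := by
        apply Finset.sum_pos'
        · intro i _
          split_ifs
          · exact Complex.normSq_nonneg _
          · exact le_refl 0
        · exact ⟨j, Finset.mem_univ j, by rw [if_pos hjμ]; exact Complex.normSq_pos.mpr hv0⟩
      exact absurd hr hpos.ne'
  have hfilter : ((Finset.univ.image lam).filter fun μ => C * P μ * Cᴴ ≠ 0) = T := by
    ext μ
    simp only [Finset.mem_filter, Finset.mem_image, Finset.mem_univ, true_and, hTdef,
      hne μ]
    tauto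
  rw [hrank, hrankB, ← hfilter]
end
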